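/- arXiv:1705.01888 — 2 statements merged into one kernel-verified Lean document; each statement's English description precedes it below -/
import Mathlib

section
/- Let M be a countable homogeneous relational structure whose automorphism group Aut(M) (with the pointwise convergence topology) contains a dense locally finite subgroup H. Then Age(M) has the extension property for partial automorphisms (EPPA): for every finite substructure A of M, there exists a finite substructure B of M containing A such that every partial automorphism of A extends to an automorphism of B. -/
open FirstOrder

/-- A partial bijection of `M` respects the relations of the structure on the
elements of its source (so it is a partial isomorphism). -/
def RespectsRel (L : FirstOrder.Language) {M : Type*} [L.Structure M]
    (p : PartialEquiv M M) : Prop :=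
  ∀ (n : ℕ) (R : L.Relations n) (t : Fin n → M), (∀ i, t i ∈ p.source) →
    (Language.Structure.RelMap R t ↔ Language.Structure.RelMap R (fun i => p (t i)))

/-- A permutation of `M` is an automorphism of the `L`-structure `M`. -/
def IsAut (L : FirstOrder.Language) {M : Type*} [L.Structure M] (g : Equiv.Perm M) : Prop :=
  ∀ (n : ℕ) (R : L.Relations n) (t : Fin n → M),
    Language.Structure.RelMap R t ↔ Language.Structure.RelMap R (fun i => g (t i))

/-- A partial automorphism of the finite substructure `A` of `M`. -/
def IsPartialAutoOn (L : FirstOrder.Language) {M : Type*} [L.Structure M]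
    (A : Set M) (p : PartialEquiv M M) : Prop :=
  p.source ⊆ A ∧ p.target ⊆ A ∧ RespectsRel L p

/-- If `M` is a countable homogeneous relational structure and `Aut(M)` contains a
dense locally finite subgroup `H`, then `Age(M)` has EPPA: every finite `A ⊆ M`
extends to a finite `B ⊆ M` such that every partial automorphism of `A` extends to
an automorphism of `B`. -/
theorem eppa_of_dense_locally_finite_subgroup
    (L : FirstOrder.Language) (M : Type*) [L.Structure M] [Countable M]
    (hrel : ∀ n, IsEmpty (L.Functions n))
    (hhom : ∀ p : PartialEquiv M M, p.source.Finite → RespectsRel L p →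
      ∃ g : Equiv.Perm M, IsAut L g ∧ ∀ x ∈ p.source, g x = p x)
    (H : Subgroup (Equiv.Perm M))
    (hHaut : ∀ h ∈ H, IsAut L h)
    (hdense : ∀ g : Equiv.Perm M, IsAut L g → ∀ A : Set M, A.Finite →
      ∃ h ∈ H, ∀ a ∈ A, h a = g a)
    (hlf : ∀ s : Set (Equiv.Perm M), s ⊆ H → s.Finite →
      ((Subgroup.closure s : Subgroup (Equiv.Perm M)) : Set (Equiv.Perm M)).Finite) :
    ∀ A : Set M, A.Finite →
      ∃ B : Set M, B.Finite ∧ A ⊆ B ∧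
        ∀ p : PartialEquiv M M, IsPartialAutoOn L A p →
          ∃ q : PartialEquiv M M, q.source = B ∧ q.target = B ∧
            RespectsRel L q ∧ ∀ x ∈ p.source, q x = p x := by
  intro A hA
  classical
  -- The set of partial automorphisms of A
  set T : Set (PartialEquiv M M) := {p | IsPartialAutoOn L A p} with hT
  -- Data map: a partial auto is determined (for our purposes) by its source and values
  set Φ : PartialEquiv M M → (Set M × (M → M)) :=
    (fun p => (p.source, fun x => if x ∈ p.source then p x else x)) with hΦ
  set D : Set (Set M × (M → M)) := Φ '' T with hD
  -- D is finite
  have hE : {f : M → M | (∀ x ∈ A, f x ∈ A) ∧ ∀ x ∉ A, f x = x}.Finite := by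
    have : Finite ↥A := hA
    have hs : {f : M → M | (∀ x ∈ A, f x ∈ A) ∧ ∀ x ∉ A, f x = x} ⊆
        Set.range (fun g : ↥A → ↥A => fun x : M =>
          if hx : x ∈ A then (g ⟨x, hx⟩ : M) else x) := by
      rintro f ⟨h1, h2⟩
      refine ⟨fun a => ⟨f a, h1 a a.2⟩, ?_⟩
      funext x
      by_cases hx : x ∈ A
      · simp [hx]
      · simp [hx, h2 x hx]
    exact (Set.finite_range _).subset hs
  have hDfin : D.Finite := by
    refine ((hA.finite_subsets.prod hE).subset ?_)
    rintro d ⟨p, hp, rfl⟩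
    obtain ⟨hps, hpt, hpr⟩ := hp
    refine ⟨hps, ?_, ?_⟩
    · intro x hx
      by_cases hxs : x ∈ p.source
      · simp only [hΦ, hxs, if_pos]
        exact hpt (p.map_source hxs)
      · simpa [hΦ, hxs] using hx
    · intro x hx
      have hxs : x ∉ p.source := fun h => hx (hps h)
      simp [hΦ, hxs]
  -- choose a section of Φ on D
  have hsec : ∀ d ∈ D, ∃ p, p ∈ T ∧ Φ p = d := by
    rintro d ⟨p, hp, rfl⟩; exact ⟨p, hp, rfl⟩
  choose ψ hψT hψΦ using hsec
  -- for each datum, choose an element of H extending the chosen partial auto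
  have hext : ∀ d (hd : d ∈ D), ∃ h, h ∈ H ∧ IsAut L h ∧
      ∀ x ∈ (ψ d hd).source, h x = ψ d hd x := by
    intro d hd
    obtain ⟨hps, hpt, hpr⟩ := hψT d hd
    obtain ⟨g, hg, hgp⟩ := hhom (ψ d hd) (hA.subset hps) hpr
    obtain ⟨h, hH, hhg⟩ := hdense g hg A hA
    exact ⟨h, hH, hHaut h hH, fun x hx => by rw [hhg x (hps hx)]; exact hgp x hx⟩
  choose h hhH hhAut hhagree using hext
  -- the finite generating set
  set s : Set (Equiv.Perm M) := {y | ∃ d hd, h d hd = y} with hs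
  have hsfin : s.Finite := hDfin.dependent_image h
  have hsH : s ⊆ (H : Set (Equiv.Perm M)) := by rintro y ⟨d, hd, rfl⟩; exact hhH d hd
  set F : Subgroup (Equiv.Perm M) := Subgroup.closure s with hF
  have hFfin : ((F : Set (Equiv.Perm M))).Finite := hlf s hsH hsfin
  have hFH : F ≤ H := (Subgroup.closure_le H).mpr hsH
  -- B
  set B : Set M := ⋃ f ∈ (F : Set (Equiv.Perm M)), f '' A with hB
  have hBfin : B.Finite := hFfin.biUnion fun f _ => hA.image f
  have hAB : A ⊆ B := by
    intro a ha
    exact Set.mem_biUnion (Subgroup.one_mem F) ⟨a, ha, rfl⟩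
  have hinv : ∀ f ∈ F, ∀ x ∈ B, f x ∈ B := by
    intro f hf x hx
    rw [hB, Set.mem_iUnion₂] at hx
    obtain ⟨g, hg, a, ha, rfl⟩ := hx
    exact Set.mem_biUnion (F.mul_mem hf hg) ⟨a, ha, by simp [Equiv.Perm.mul_apply]⟩
  refine ⟨B, hBfin, hAB, ?_⟩
  intro p hp
  have hpT : p ∈ T := hp
  have hd : Φ p ∈ D := ⟨p, hpT, rfl⟩
  set hh : Equiv.Perm M := h (Φ p) hd with hhh
  have hhs : hh ∈ s := ⟨Φ p, hd, rfl⟩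
  have hhF : hh ∈ F := Subgroup.subset_closure hhs
  have hhinvF : hh⁻¹ ∈ F := F.inv_mem hhF
  -- agreement with p on p.source
  have hsrc : (ψ (Φ p) hd).source = p.source := congrArg Prod.fst (hψΦ (Φ p) hd)
  have hvals : ∀ x ∈ p.source, ψ (Φ p) hd x = p x := by
    intro x hx
    have hfun := congrArg Prod.snd (hψΦ (Φ p) hd)
    have := congrFun hfun x
    simp only [hΦ] at this
    rw [hsrc] at this
    simpa [hx] using this
  have hagree : ∀ x ∈ p.source, hh x = p x := by
    intro x hx
    rw [hhagree (Φ p) hd x (hsrc ▸ hx)]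
    exact hvals x hx
  refine ⟨PartialEquiv.mk (⇑hh) (⇑hh⁻¹) B B (fun x hx => hinv hh hhF x hx)
      (fun x hx => hinv hh⁻¹ hhinvF x hx)
      (fun x _ => hh.symm_apply_apply x)
      (fun x _ => hh.apply_symm_apply x), rfl, rfl, ?_, ?_⟩
  · intro n R t _
    exact hhAut (Φ p) hd n R t
  · intro x hx
    exact hagree x hx
end

section
/- Let M be a countable homogeneous relational structure over a finite relational language such that Age(M) has coherent EPPA. Then Aut(M) contains a dense locally finite subgroup: there is a subgroup H ≤ Aut(M) such that every finitely generated subgroup of H is finite, and for every g ∈ Aut(M) and finite A ⊆ M there is h ∈ H with h↾A = g↾A. -/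
open FirstOrder

section EppaHelpers
variable {M : Type*}

/-- Auxiliary chain of finite sets exhausting `M`. -/
def eppaChain (e : ℕ → M) (ext : Set M → Set M) : ℕ → Set M
  | 0 => {e 0}
  | n+1 => ext (eppaChain e ext n) ∪ {e (n+1)}

theorem eppaChain_succ (e : ℕ → M) (ext : Set M → Set M) (n : ℕ) :
    eppaChain e ext (n+1) = ext (eppaChain e ext n) ∪ {e (n+1)} := rfl

/-- The tower of successive EPPA-extensions of a partial automorphism. -/
def eppaTower (Φ : Set M → PartialEquiv M M → PartialEquiv M M) (Ach : ℕ → Set M)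
    (i : ℕ) (p : PartialEquiv M M) : ℕ → PartialEquiv M M
  | 0 => Φ (Ach i) p
  | k+1 => Φ (Ach (i+k+1)) (eppaTower Φ Ach i p k)

theorem eppaTower_zero (Φ : Set M → PartialEquiv M M → PartialEquiv M M) (Ach : ℕ → Set M)
    (i : ℕ) (p : PartialEquiv M M) : eppaTower Φ Ach i p 0 = Φ (Ach i) p := rfl

theorem eppaTower_succ (Φ : Set M → PartialEquiv M M → PartialEquiv M M) (Ach : ℕ → Set M)
    (i : ℕ) (p : PartialEquiv M M) (k : ℕ) :
    eppaTower Φ Ach i p (k+1) = Φ (Ach (i+k+1)) (eppaTower Φ Ach i p k) := rfl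

/-- The limit of a tower of compatible partial maps, as a global function. -/
noncomputable def eppaLim (T : ℕ → PartialEquiv M M)
    (hex : ∀ x : M, ∃ k, x ∈ (T k).source) (x : M) : M :=
  T (Classical.choose (hex x)) x

theorem eppaLim_eq {T : ℕ → PartialEquiv M M} (hex : ∀ x : M, ∃ k, x ∈ (T k).source)
    (hmono : ∀ k, (T k).source ⊆ (T (k+1)).source)
    (hcpt : ∀ k, ∀ x ∈ (T k).source, T (k+1) x = T k x)
    {k : ℕ} {x : M} (hx : x ∈ (T k).source) : eppaLim T hex x = T k x := by
  have hstep : ∀ (j d : ℕ), x ∈ (T j).source → T (j+d) x = T j x ∧ x ∈ (T (j+d)).source := by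
    intro j d hj
    induction d with
    | zero => exact ⟨rfl, hj⟩
    | succ d ih => exact ⟨(hcpt _ _ ih.2).trans ih.1, hmono _ ih.2⟩
  have hxn : x ∈ (T (Classical.choose (hex x))).source := Classical.choose_spec (hex x)
  set n := Classical.choose (hex x) with hn
  have h1 := hstep n (max n k - n) hxn
  have h2 := hstep k (max n k - k) hx
  rw [Nat.add_sub_cancel' (Nat.le_max_left n k)] at h1
  rw [Nat.add_sub_cancel' (Nat.le_max_right n k)] at h2
  unfold eppaLim
  rw [← hn, h1.1.symm.trans h2.1]

end EppaHelpers

/-- If `M` is a countable homogeneous structure over a finite relational language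
and `Age(M)` has coherent EPPA (here phrased inside `M`, as homogeneity allows),
then `Aut(M)` contains a dense locally finite subgroup. -/
theorem dense_locally_finite_subgroup_of_coherent_eppa
    (L : FirstOrder.Language) (M : Type*) [L.Structure M] [Countable M]
    (hrel : ∀ n, IsEmpty (L.Functions n))
    (hfinrel : ∀ n, Finite (L.Relations n))
    (hbd : ∃ N : ℕ, ∀ n, N ≤ n → IsEmpty (L.Relations n))
    (hhom : ∀ p : PartialEquiv M M, p.source.Finite → RespectsRel L p →
      ∃ g : Equiv.Perm M, IsAut L g ∧ ∀ x ∈ p.source, g x = p x)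
    (hEPPA : ∀ A : Set M, A.Finite →
      ∃ B : Set M, B.Finite ∧ A ⊆ B ∧
        ∃ φ : PartialEquiv M M → PartialEquiv M M,
          (∀ p, IsPartialAutoOn L A p →
            (φ p).source = B ∧ (φ p).target = B ∧ RespectsRel L (φ p) ∧
              ∀ x ∈ p.source, φ p x = p x) ∧
          (∀ p₁ p₂ q, IsPartialAutoOn L A p₁ → IsPartialAutoOn L A p₂ →
            IsPartialAutoOn L A q →
            p₂.source = q.source → p₁.target = q.target → p₂.target = p₁.source →
            (∀ x ∈ q.source, q x = p₁ (p₂ x)) →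
            ∀ x ∈ B, φ q x = φ p₁ (φ p₂ x))) :
    ∃ H : Subgroup (Equiv.Perm M),
      (∀ h ∈ H, IsAut L h) ∧
      (∀ s : Set (Equiv.Perm M), s ⊆ H → s.Finite →
        ((Subgroup.closure s : Subgroup (Equiv.Perm M)) : Set (Equiv.Perm M)).Finite) ∧
      (∀ g : Equiv.Perm M, IsAut L g → ∀ A : Set M, A.Finite →
        ∃ h ∈ H, ∀ a ∈ A, h a = g a) := by
  classical
  rcases isEmpty_or_nonempty M with hM | hM
  · haveI : Subsingleton (Equiv.Perm M) := ⟨fun f g => Equiv.ext fun x => (hM.false x).elim⟩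
    refine ⟨⊤, ?_, ?_, ?_⟩
    · intro g _ n R t
      have h : (fun i => g (t i)) = t := funext fun i => (hM.false (t i)).elim
      rw [h]
    · intro s _ _
      haveI : Finite (Equiv.Perm M) := Finite.of_subsingleton
      exact Set.toFinite _
    · intro g _ A _
      exact ⟨g, trivial, fun a _ => rfl⟩
  · obtain ⟨e, he⟩ := exists_surjective_nat M
    obtain ⟨ext, Φ, hkey⟩ :
        ∃ (ext : Set M → Set M) (Φ : Set M → PartialEquiv M M → PartialEquiv M M),
        ∀ S : Set M, S.Finite →
          (ext S).Finite ∧ S ⊆ ext S ∧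
          (∀ p, IsPartialAutoOn L S p →
            (Φ S p).source = ext S ∧ (Φ S p).target = ext S ∧ RespectsRel L (Φ S p) ∧
              ∀ x ∈ p.source, Φ S p x = p x) ∧
          (∀ p₁ p₂ q, IsPartialAutoOn L S p₁ → IsPartialAutoOn L S p₂ →
            IsPartialAutoOn L S q →
            p₂.source = q.source → p₁.target = q.target → p₂.target = p₁.source →
            (∀ x ∈ q.source, q x = p₁ (p₂ x)) →
            ∀ x ∈ ext S, Φ S q x = Φ S p₁ (Φ S p₂ x)) := by
      choose Bf h1 h2 φf h3 h4 using hEPPA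
      refine ⟨fun S => if h : S.Finite then Bf S h else ∅,
        fun S p => if h : S.Finite then φf S h p else p, fun S hS => ?_⟩
      simp only [dif_pos hS]
      exact ⟨h1 S hS, h2 S hS, h3 S hS, h4 S hS⟩
    set Ach : ℕ → Set M := eppaChain e ext with hAchdef
    have hAfin : ∀ n, (Ach n).Finite := by
      intro n
      induction n with
      | zero => exact Set.finite_singleton _
      | succ n ih => exact ((hkey _ ih).1).union (Set.finite_singleton _)
    have hK := fun n => hkey (Ach n) (hAfin n)
    have hBfin : ∀ n, (ext (Ach n)).Finite := fun n => (hK n).1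
    have hAB : ∀ n, Ach n ⊆ ext (Ach n) := fun n => (hK n).2.1
    have hBA : ∀ n, ext (Ach n) ⊆ Ach (n+1) := fun n => Set.subset_union_left
    have hAA : ∀ n, Ach n ⊆ Ach (n+1) := fun n => (hAB n).trans (hBA n)
    have hAle : ∀ m n, m ≤ n → Ach m ⊆ Ach n := by
      intro m n h
      induction n, h using Nat.le_induction with
      | base => exact subset_rfl
      | succ n hmn ih => exact ih.trans (hAA n)
    have hBB : ∀ m n, m ≤ n → ext (Ach m) ⊆ ext (Ach n) := by
      intro m n h
      rcases eq_or_lt_of_le h with rfl | h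
      · exact subset_rfl
      · exact (hBA m).trans ((hAle (m+1) n h).trans (hAB n))
    have hcovA : ∀ x : M, ∃ n, x ∈ Ach n := by
      intro x
      obtain ⟨n, rfl⟩ := he x
      cases n with
      | zero => exact ⟨0, rfl⟩
      | succ n => exact ⟨n+1, Set.mem_union_right _ rfl⟩
    have hcovFin : ∀ S : Set M, S.Finite → ∃ m, S ⊆ Ach m := by
      intro S hS
      choose f hf using hcovA
      refine ⟨hS.toFinset.sup f, fun x hx => ?_⟩
      exact hAle (f x) _ (Finset.le_sup (hS.mem_toFinset.2 hx)) (hf x)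
    have hsymmPA : ∀ (S : Set M) (p : PartialEquiv M M),
        IsPartialAutoOn L S p → IsPartialAutoOn L S p.symm := by
      rintro S p ⟨h1, h2, h3⟩
      refine ⟨h2, h1, ?_⟩
      intro n R t ht
      have hmem : ∀ i, p.symm (t i) ∈ p.source := fun i => p.map_target (ht i)
      have h4 := h3 n R (fun i => p.symm (t i)) hmem
      have heq : (fun i => p (p.symm (t i))) = t := funext fun i => p.right_inv (ht i)
      rw [heq] at h4
      exact h4.symm
    have hofSet : ∀ (S U : Set M), U ⊆ S → IsPartialAutoOn L S (PartialEquiv.ofSet U) := by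
      intro S U hU
      exact ⟨hU, hU, fun n R t _ => Iff.rfl⟩
    set T : ℕ → PartialEquiv M M → ℕ → PartialEquiv M M := eppaTower Φ Ach with hTdef
    have hTzero : ∀ i p, T i p 0 = Φ (Ach i) p := fun i p => rfl
    have hTsucc : ∀ i p k, T i p (k+1) = Φ (Ach (i+k+1)) (T i p k) := fun i p k => rfl
    have hT : ∀ i p, IsPartialAutoOn L (Ach i) p → ∀ k,
        (T i p k).source = ext (Ach (i+k)) ∧ (T i p k).target = ext (Ach (i+k)) ∧
        RespectsRel L (T i p k) ∧ ∀ x ∈ p.source, T i p k x = p x := by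
      intro i p hp k
      induction k with
      | zero =>
        have h := (hK i).2.2.1 p hp
        exact ⟨h.1, h.2.1, h.2.2.1, h.2.2.2⟩
      | succ k ih =>
        have hPAk : IsPartialAutoOn L (Ach (i+k+1)) (T i p k) :=
          ⟨by rw [ih.1]; exact hBA (i+k), by rw [ih.2.1]; exact hBA (i+k), ih.2.2.1⟩
        have h := (hK (i+k+1)).2.2.1 (T i p k) hPAk
        refine ⟨h.1, h.2.1, h.2.2.1, fun x hx => ?_⟩
        have hx' : x ∈ (T i p k).source := by
          rw [ih.1]
          exact hAB (i+k) (hAle i (i+k) (Nat.le_add_right i k) (hp.1 hx))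
        exact (h.2.2.2 x hx').trans (ih.2.2.2 x hx)
    have hTPA : ∀ i p, IsPartialAutoOn L (Ach i) p → ∀ k,
        IsPartialAutoOn L (Ach (i+k+1)) (T i p k) := by
      intro i p hp k
      obtain ⟨h1, h2, h3, _⟩ := hT i p hp k
      exact ⟨by rw [h1]; exact hBA (i+k), by rw [h2]; exact hBA (i+k), h3⟩
    have hText : ∀ i p, IsPartialAutoOn L (Ach i) p → ∀ k, ∀ x ∈ (T i p k).source,
        T i p (k+1) x = T i p k x := by
      intro i p hp k x hx
      rw [hTsucc]
      exact ((hK (i+k+1)).2.2.1 (T i p k) (hTPA i p hp k)).2.2.2 x hx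
    have hTmono : ∀ i p, IsPartialAutoOn L (Ach i) p → ∀ k,
        (T i p k).source ⊆ (T i p (k+1)).source := by
      intro i p hp k
      rw [(hT i p hp k).1, (hT i p hp (k+1)).1]
      exact hBB _ _ (by omega)
    have hexT : ∀ i p, IsPartialAutoOn L (Ach i) p → ∀ x : M, ∃ k, x ∈ (T i p k).source := by
      intro i p hp x
      obtain ⟨n, hn⟩ := hcovA x
      refine ⟨n, ?_⟩
      rw [(hT i p hp n).1]
      exact hAB (i+n) (hAle n (i+n) (by omega) hn)
    have hG : ∀ i p (hp : IsPartialAutoOn L (Ach i) p) k, ∀ x ∈ (T i p k).source,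
        eppaLim (T i p) (hexT i p hp) x = T i p k x :=
      fun i p hp k x hx => eppaLim_eq (hexT i p hp) (hTmono i p hp) (hText i p hp) hx
    have hIdPhi : ∀ m q, IsPartialAutoOn L (Ach m) q → q.source = q.target →
        (∀ x ∈ q.source, q x = x) → ∀ x ∈ ext (Ach m), Φ (Ach m) q x = x := by
      intro m q hq hst hid x hx
      have h4 := (hK m).2.2.2 q q q hq hq hq rfl rfl hst.symm
        (fun y hy => by rw [hid y hy]; exact (hid y hy).symm) x hx
      have hsrc := ((hK m).2.2.1 q hq).1
      have htgt := ((hK m).2.2.1 q hq).2.1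
      have hmem : Φ (Ach m) q x ∈ ext (Ach m) := by
        rw [← htgt]
        exact (Φ (Ach m) q).map_source (by rw [hsrc]; exact hx)
      exact ((Φ (Ach m) q).injOn (by rw [hsrc]; exact hx) (by rw [hsrc]; exact hmem) h4).symm
    have hIdLim : ∀ m q (hq : IsPartialAutoOn L (Ach m) q), q.source = q.target →
        (∀ x ∈ q.source, q x = x) →
        ∀ x, eppaLim (T m q) (hexT m q hq) x = x := by
      intro m q hq hst hid
      have htow : ∀ k, ∀ x ∈ ext (Ach (m+k)), T m q k x = x := by
        intro k
        induction k with
        | zero => intro x hx; rw [hTzero]; exact hIdPhi m q hq hst hid x hx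
        | succ k ih =>
          intro x hx
          rw [hTsucc]
          refine hIdPhi (m+k+1) (T m q k) (hTPA m q hq k) ?_ ?_ x hx
          · rw [(hT m q hq k).1, (hT m q hq k).2.1]
          · intro y hy
            exact ih y (by rw [← (hT m q hq k).1]; exact hy)
      intro x
      obtain ⟨k, hk⟩ := hexT m q hq x
      rw [hG m q hq k x hk]
      exact htow k x (by rw [← (hT m q hq k).1]; exact hk)
    have hInvTow : ∀ m p (hp : IsPartialAutoOn L (Ach m) p) k,
        (∀ x ∈ ext (Ach (m+k)), T m p.symm k (T m p k x) = x) ∧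
        (∀ x ∈ ext (Ach (m+k)), T m p k (T m p.symm k x) = x) := by
      intro m p hp k
      have hps := hsymmPA _ p hp
      induction k with
      | zero =>
        constructor
        · intro x hx
          have h4 := (hK m).2.2.2 p.symm p (PartialEquiv.ofSet p.source) hps hp
            (hofSet _ _ hp.1) rfl rfl rfl
            (fun y hy => (p.left_inv hy).symm) x hx
          rw [hTzero, hTzero, ← h4]
          exact hIdPhi m _ (hofSet _ _ hp.1) rfl (fun y _ => rfl) x hx
        · intro x hx
          have h4 := (hK m).2.2.2 p p.symm (PartialEquiv.ofSet p.target) hp hps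
            (hofSet _ _ hp.2.1) rfl rfl rfl
            (fun y hy => (p.right_inv hy).symm) x hx
          rw [hTzero, hTzero, ← h4]
          exact hIdPhi m _ (hofSet _ _ hp.2.1) rfl (fun y _ => rfl) x hx
      | succ k ih =>
        constructor
        · intro x hx
          have h4 := (hK (m+k+1)).2.2.2 (T m p.symm k) (T m p k)
            (PartialEquiv.ofSet (ext (Ach (m+k)))) (hTPA m p.symm hps k) (hTPA m p hp k)
            (hofSet _ _ (hBA (m+k)))
            ((hT m p hp k).1)
            ((hT m p.symm hps k).2.1)
            ((hT m p hp k).2.1.trans ((hT m p.symm hps k).1).symm)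
            (fun y hy => (ih.1 y hy).symm) x hx
          rw [hTsucc, hTsucc, ← h4]
          exact hIdPhi (m+k+1) _ (hofSet _ _ (hBA (m+k))) rfl (fun y _ => rfl) x hx
        · intro x hx
          have h4 := (hK (m+k+1)).2.2.2 (T m p k) (T m p.symm k)
            (PartialEquiv.ofSet (ext (Ach (m+k)))) (hTPA m p hp k) (hTPA m p.symm hps k)
            (hofSet _ _ (hBA (m+k)))
            ((hT m p.symm hps k).1)
            ((hT m p hp k).2.1)
            ((hT m p.symm hps k).2.1.trans ((hT m p hp k).1).symm)
            (fun y hy => (ih.2 y hy).symm) x hx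
          rw [hTsucc, hTsucc, ← h4]
          exact hIdPhi (m+k+1) _ (hofSet _ _ (hBA (m+k))) rfl (fun y _ => rfl) x hx
    have hGinv : ∀ m p (hp : IsPartialAutoOn L (Ach m) p),
        (∀ x, eppaLim (T m p.symm) (hexT m p.symm (hsymmPA _ p hp))
            (eppaLim (T m p) (hexT m p hp) x) = x) ∧
        (∀ x, eppaLim (T m p) (hexT m p hp)
            (eppaLim (T m p.symm) (hexT m p.symm (hsymmPA _ p hp)) x) = x) := by
      intro m p hp
      have hps := hsymmPA _ p hp
      constructor
      · intro x
        obtain ⟨k, hk⟩ := hexT m p hp x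
        rw [hG m p hp k x hk]
        have h1 : T m p k x ∈ (T m p.symm k).source := by
          rw [(hT m p.symm hps k).1, ← (hT m p hp k).2.1]
          exact (T m p k).map_source hk
        rw [hG m p.symm hps k _ h1]
        exact (hInvTow m p hp k).1 x (by rw [← (hT m p hp k).1]; exact hk)
      · intro x
        obtain ⟨k, hk⟩ := hexT m p.symm hps x
        rw [hG m p.symm hps k x hk]
        have h1 : T m p.symm k x ∈ (T m p k).source := by
          rw [(hT m p hp k).1, ← (hT m p.symm hps k).2.1]
          exact (T m p.symm k).map_source hk
        rw [hG m p hp k _ h1]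
        exact (hInvTow m p hp k).2 x (by rw [← (hT m p.symm hps k).1]; exact hk)
    have hGmul : ∀ m p r (hp : IsPartialAutoOn L (Ach m) p) (hr : IsPartialAutoOn L (Ach m) r)
        (hq : IsPartialAutoOn L (Ach m) (r.trans p)),
        r.target = p.source → (r.trans p).source = r.source → (r.trans p).target = p.target →
        ∀ x, eppaLim (T m (r.trans p)) (hexT m _ hq) x =
          eppaLim (T m p) (hexT m p hp) (eppaLim (T m r) (hexT m r hr) x) := by
      intro m p r hp hr hq hrt hqs hqt
      have htow : ∀ k, ∀ x ∈ ext (Ach (m+k)), T m (r.trans p) k x = T m p k (T m r k x) := by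
        intro k
        induction k with
        | zero =>
          intro x hx
          have h4 := (hK m).2.2.2 p r (r.trans p) hp hr hq hqs.symm hqt.symm hrt
            (fun y _ => congrFun (PartialEquiv.coe_trans r p) y) x hx
          rw [hTzero, hTzero, hTzero]
          exact h4
        | succ k ih =>
          intro x hx
          have h4 := (hK (m+k+1)).2.2.2 (T m p k) (T m r k) (T m (r.trans p) k)
            (hTPA m p hp k) (hTPA m r hr k) (hTPA m _ hq k)
            ((hT m r hr k).1.trans ((hT m _ hq k).1).symm)
            ((hT m p hp k).2.1.trans ((hT m _ hq k).2.1).symm)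
            ((hT m r hr k).2.1.trans ((hT m p hp k).1).symm)
            (fun y hy => ih y (by rw [← (hT m _ hq k).1]; exact hy)) x hx
          rw [hTsucc, hTsucc, hTsucc]
          exact h4
      intro x
      obtain ⟨k, hk⟩ := hexT m r hr x
      have hkB : x ∈ ext (Ach (m+k)) := by rw [← (hT m r hr k).1]; exact hk
      have hk2 : x ∈ (T m (r.trans p) k).source := by rw [(hT m _ hq k).1]; exact hkB
      have hk3 : T m r k x ∈ (T m p k).source := by
        rw [(hT m p hp k).1, ← (hT m r hr k).2.1]
        exact (T m r k).map_source hk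
      rw [hG m _ hq k x hk2, hG m r hr k x hk, hG m p hp k _ hk3]
      exact htow k x hkB
    have hTsh : ∀ i p k, T (i+1) (T i p 0) k = T i p (k+1) := by
      intro i p k
      induction k with
      | zero => rfl
      | succ k ih =>
        have hnn : i+1+k+1 = i+(k+1)+1 := by omega
        rw [hTsucc (i+1) (T i p 0) k, ih, hTsucc i p (k+1), hnn]
    have hGsh : ∀ i p (hp : IsPartialAutoOn L (Ach i) p) x,
        eppaLim (T i p) (hexT i p hp) x =
        eppaLim (T (i+1) (T i p 0)) (hexT (i+1) (T i p 0) (hTPA i p hp 0)) x := by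
      intro i p hp x
      obtain ⟨k, hk⟩ := hexT i p hp x
      have hk1 : x ∈ (T i p (k+1)).source := hTmono i p hp k hk
      have hk2 : x ∈ (T (i+1) (T i p 0) k).source := by rw [hTsh]; exact hk1
      rw [hG i p hp (k+1) x hk1, hG (i+1) (T i p 0) (hTPA i p hp 0) k x hk2, hTsh]
    set F : ℕ → Set (Equiv.Perm M) := fun m =>
      {g | ∃ p, ∃ hp : IsPartialAutoOn L (Ach (m+1)) p,
        p.source = ext (Ach m) ∧ p.target = ext (Ach m) ∧
        ∀ x, g x = eppaLim (T (m+1) p) (hexT (m+1) p hp) x} with hFdef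
    have hFone : ∀ m, (1 : Equiv.Perm M) ∈ F m := by
      intro m
      refine ⟨PartialEquiv.ofSet (ext (Ach m)), hofSet _ _ (hBA m), rfl, rfl, fun x => ?_⟩
      exact (hIdLim (m+1) _ (hofSet _ _ (hBA m)) rfl (fun y _ => rfl) x).symm
    have hFinv : ∀ m g, g ∈ F m → g⁻¹ ∈ F m := by
      rintro m g ⟨p, hp, h1, h2, h3⟩
      refine ⟨p.symm, hsymmPA _ p hp, h2, h1, fun x => ?_⟩
      have hx : g (eppaLim (T (m+1) p.symm) (hexT (m+1) p.symm (hsymmPA _ p hp)) x) = x := by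
        rw [h3]
        exact (hGinv (m+1) p hp).2 x
      calc g⁻¹ x
          = g⁻¹ (g (eppaLim (T (m+1) p.symm) (hexT _ _ (hsymmPA _ p hp)) x)) := by rw [hx]
        _ = _ := Equiv.symm_apply_apply g _
    have hFmul : ∀ m g₁ g₂, g₁ ∈ F m → g₂ ∈ F m → g₁ * g₂ ∈ F m := by
      rintro m g₁ g₂ ⟨p, hp, hp1, hp2, hp3⟩ ⟨r, hr, hr1, hr2, hr3⟩
      have hqs : (r.trans p).source = ext (Ach m) := by
        rw [PartialEquiv.trans_source, hr1, hp1]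
        apply Set.Subset.antisymm
        · exact Set.inter_subset_left
        · intro x hx
          refine ⟨hx, ?_⟩
          have hh := r.map_source (x := x) (by rw [hr1]; exact hx)
          rw [hr2] at hh
          simpa using hh
      have hqt : (r.trans p).target = ext (Ach m) := by
        rw [PartialEquiv.trans_target, hp2, hr2]
        apply Set.Subset.antisymm
        · exact Set.inter_subset_left
        · intro x hx
          refine ⟨hx, ?_⟩
          have hh := p.map_target (x := x) (by rw [hp2]; exact hx)
          rw [hp1] at hh
          simpa using hh
      have hqPA : IsPartialAutoOn L (Ach (m+1)) (r.trans p) := by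
        refine ⟨by rw [hqs]; exact hBA m, by rw [hqt]; exact hBA m, ?_⟩
        intro n R t ht
        have htB : ∀ i, t i ∈ ext (Ach m) := fun i => by rw [← hqs]; exact ht i
        have ht1 : ∀ i, t i ∈ r.source := fun i => by rw [hr1]; exact htB i
        have ht2 : ∀ i, r (t i) ∈ p.source := fun i => by
          rw [hp1, ← hr2]; exact r.map_source (ht1 i)
        have i1 := hr.2.2 n R t ht1
        have i2 := hp.2.2 n R (fun i => r (t i)) ht2
        have hco : (fun i => (r.trans p) (t i)) = fun i => p (r (t i)) :=
          funext fun i => congrFun (PartialEquiv.coe_trans r p) (t i)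
        rw [hco]
        exact i1.trans i2
      refine ⟨r.trans p, hqPA, hqs, hqt, fun x => ?_⟩
      have hmm := hGmul (m+1) p r hp hr hqPA (hr2.trans hp1.symm) (hqs.trans hr1.symm)
        (hqt.trans hp2.symm) x
      rw [hmm, ← hr3 x, ← hp3 (g₂ x)]
      exact Equiv.Perm.mul_apply g₁ g₂ x
    have hFmono : ∀ m, F m ⊆ F (m+1) := by
      rintro m g ⟨p, hp, h1, h2, h3⟩
      refine ⟨T (m+1) p 0, hTPA (m+1) p hp 0, (hT (m+1) p hp 0).1, (hT (m+1) p hp 0).2.1,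
        fun x => ?_⟩
      rw [h3 x]
      exact hGsh (m+1) p hp x
    have hFle : ∀ m n, m ≤ n → F m ⊆ F n := by
      intro m n h
      induction n, h using Nat.le_induction with
      | base => exact subset_rfl
      | succ n hmn ih => exact ih.trans (hFmono n)
    have hFfix : ∀ m g, g ∈ F m → (∀ x ∈ ext (Ach m), g x = x) → g = 1 := by
      rintro m g ⟨p, hp, h1, h2, h3⟩ hid
      have hpid : ∀ x ∈ p.source, p x = x := by
        intro x hx
        have hx0 : x ∈ (T (m+1) p 0).source := by
          rw [(hT (m+1) p hp 0).1]
          exact hBB m (m+1) (by omega) (by rw [← h1]; exact hx)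
        have hlim := hG (m+1) p hp 0 x hx0
        rw [hTzero] at hlim
        have hext := ((hK (m+1)).2.2.1 p hp).2.2.2 x hx
        rw [hext] at hlim
        rw [← hlim, ← h3 x]
        exact hid x (by rw [← h1]; exact hx)
      have hlim := hIdLim (m+1) p hp (h1.trans h2.symm) hpid
      apply Equiv.ext
      intro x
      rw [h3 x, hlim x]
      rfl
    have hFfin : ∀ m, (F m).Finite := by
      intro m
      have hBm : (ext (Ach m)).Finite := hBfin m
      haveI := hBm.to_subtype
      set ρ : Equiv.Perm M → (↥(ext (Ach m)) → M) := fun g x => g ↑x with hρ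
      have hmaps : ∀ g ∈ F m, ∀ x : ↥(ext (Ach m)), g ↑x ∈ ext (Ach m) := by
        rintro g ⟨p, hp, h1, h2, h3⟩ x
        have hxp : (x : M) ∈ p.source := by rw [h1]; exact x.2
        have hx0 : (x : M) ∈ (T (m+1) p 0).source := by
          rw [(hT (m+1) p hp 0).1]
          exact hBB m (m+1) (by omega) x.2
        rw [h3, hG (m+1) p hp 0 _ hx0, (hT (m+1) p hp 0).2.2.2 _ hxp]
        have hh := p.map_source hxp
        rwa [h2] at hh
      have himg : ρ '' F m ⊆ Set.pi Set.univ (fun _ : ↥(ext (Ach m)) => ext (Ach m)) := by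
        rintro f ⟨g, hg, rfl⟩
        intro x _
        exact hmaps g hg x
      have hpifin : (Set.pi Set.univ (fun _ : ↥(ext (Ach m)) => ext (Ach m))).Finite :=
        Set.Finite.pi (fun _ => hBm)
      have hinj : Set.InjOn ρ (F m) := by
        intro g₁ hg₁ g₂ hg₂ hgg
        have hmem : g₂⁻¹ * g₁ ∈ F m := hFmul m _ _ (hFinv m g₂ hg₂) hg₁
        have hone : g₂⁻¹ * g₁ = 1 := by
          apply hFfix m _ hmem
          intro x hx
          have hx2 : g₁ x = g₂ x := congrFun hgg ⟨x, hx⟩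
          show g₂⁻¹ (g₁ x) = x
          rw [hx2]
          exact Equiv.symm_apply_apply g₂ x
        exact (inv_mul_eq_one.mp hone).symm
      exact Set.Finite.of_finite_image (hpifin.subset himg) hinj
    refine ⟨{ carrier := ⋃ m, F m
              one_mem' := Set.mem_iUnion.2 ⟨0, hFone 0⟩
              mul_mem' := ?_
              inv_mem' := ?_ }, ?_, ?_, ?_⟩
    · intro a b ha hb
      obtain ⟨m₁, ha⟩ := Set.mem_iUnion.1 ha
      obtain ⟨m₂, hb⟩ := Set.mem_iUnion.1 hb
      exact Set.mem_iUnion.2 ⟨max m₁ m₂, hFmul _ _ _ (hFle _ _ (le_max_left _ _) ha)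
        (hFle _ _ (le_max_right _ _) hb)⟩
    · intro a ha
      obtain ⟨m, ha⟩ := Set.mem_iUnion.1 ha
      exact Set.mem_iUnion.2 ⟨m, hFinv m a ha⟩
    · intro h hmem n R t
      obtain ⟨m, hm⟩ := Set.mem_iUnion.1 hmem
      obtain ⟨p, hp, h1, h2, h3⟩ := hm
      choose f hf using hcovA
      obtain ⟨k, hik⟩ : ∃ k, ∀ i : Fin n, f (t i) ≤ k :=
        ⟨Finset.univ.sup (fun i : Fin n => f (t i)),
          fun i => Finset.le_sup (f := fun i : Fin n => f (t i)) (Finset.mem_univ i)⟩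
      have hmemT : ∀ i, t i ∈ (T (m+1) p k).source := by
        intro i
        rw [(hT (m+1) p hp k).1]
        refine hAB _ (hAle (f (t i)) (m+1+k) ?_ (hf (t i)))
        calc f (t i) ≤ k := hik i
          _ ≤ m+1+k := by omega
      have heq : (fun i => h (t i)) = fun i => T (m+1) p k (t i) :=
        funext fun i => (h3 (t i)).trans (hG (m+1) p hp k _ (hmemT i))
      rw [heq]
      exact (hT (m+1) p hp k).2.2.1 n R t hmemT
    · intro s hsub hsfin
      have hchoice : ∀ g : Equiv.Perm M, g ∈ s → ∃ m, g ∈ F m := by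
        intro g hg
        exact Set.mem_iUnion.1 (hsub hg)
      choose! mf hmf using hchoice
      set mtop := hsfin.toFinset.sup mf with hmtop
      have hsF : s ⊆ F mtop := by
        intro g hg
        exact hFle (mf g) mtop (Finset.le_sup (hsfin.mem_toFinset.2 hg)) (hmf g hg)
      set K : Subgroup (Equiv.Perm M) :=
        { carrier := F mtop
          one_mem' := hFone mtop
          mul_mem' := fun ha hb => hFmul mtop _ _ ha hb
          inv_mem' := fun ha => hFinv mtop _ ha } with hKdef
      have hle : Subgroup.closure s ≤ K := (Subgroup.closure_le K).2 hsF
      exact Set.Finite.subset (hFfin mtop) fun x hx => hle hx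
    · intro g hg Aset hAset
      have hSfin : (Aset ∪ g '' Aset).Finite := hAset.union (hAset.image g)
      obtain ⟨m, hm⟩ := hcovFin (Aset ∪ g '' Aset) hSfin
      set p : PartialEquiv M M :=
        { toFun := g
          invFun := g.symm
          source := Aset
          target := g '' Aset
          map_source' := fun x hx => ⟨x, hx, rfl⟩
          map_target' := by rintro x ⟨y, hy, rfl⟩; simpa using hy
          left_inv' := fun x _ => g.symm_apply_apply x
          right_inv' := fun x _ => g.apply_symm_apply x } with hpdef
      have hpPA : IsPartialAutoOn L (Ach m) p := by
        refine ⟨fun x hx => hm (Or.inl hx), fun x hx => hm (Or.inr hx), ?_⟩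
        intro n R t ht
        exact hg n R t
      have hps := hsymmPA _ p hpPA
      set h : Equiv.Perm M :=
        { toFun := eppaLim (T m p) (hexT m p hpPA)
          invFun := eppaLim (T m p.symm) (hexT m p.symm hps)
          left_inv := (hGinv m p hpPA).1
          right_inv := (hGinv m p hpPA).2 } with hhdef
      refine ⟨h, ?_, ?_⟩
      · exact Set.mem_iUnion.2 ⟨m, T m p 0, hTPA m p hpPA 0, (hT m p hpPA 0).1,
          (hT m p hpPA 0).2.1, fun x => hGsh m p hpPA x⟩
      · intro a ha
        have ha0 : a ∈ (T m p 0).source := by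
          rw [(hT m p hpPA 0).1]
          exact hAB m (hm (Or.inl ha))
        have hha : h a = eppaLim (T m p) (hexT m p hpPA) a := rfl
        rw [hha, hG m p hpPA 0 a ha0, (hT m p hpPA 0).2.2.2 a ha]
end
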